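/- Suppose A, B ⊆ 𝔽₂ⁿ are nonempty with Dbl(A,B) ≤ K for some K ≥ 1. Then there exist subsets A′ ⊆ A, B′ ⊆ B with |A′| ≥ c·exp(−C√K)·|A| and |B′| ≥ c·exp(−C√K)·|B| (for absolute constants c, C > 0), and a real J with 1 ≤ J ≤ K, such that Dbl(A′,B′) ≤ J and the quadruple (A′,B′,A′,B′) is coherently 1/√(2J)-flat. -/

import Mathlib

open Finset Pointwise

noncomputable def hatOne {n : ℕ} (A : Finset (Fin n → ZMod 2)) (ξ : Fin n → ZMod 2) : ℝ :=
  (∑ x ∈ A, (-1 : ℝ) ^ (∑ i, ξ i * x i : ZMod 2).val) / 2 ^ n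

def spec {n : ℕ} (δ : ℝ) (A : Finset (Fin n → ZMod 2)) : Set (Fin n → ZMod 2) :=
  {ξ | δ * A.card / 2 ^ n ≤ |hatOne A ξ|}

def CoherentlyFlat {n : ℕ} (δ : ℝ) (A₁ A₂ A₃ A₄ : Finset (Fin n → ZMod 2)) : Prop :=
  ∀ ξ : Fin n → ZMod 2,
    (ξ ∈ spec (9 / 10) A₁ ∧ ξ ∈ spec (9 / 10) A₂ ∧
     ξ ∈ spec (9 / 10) A₃ ∧ ξ ∈ spec (9 / 10) A₄) ∨
    (ξ ∉ spec δ A₁ ∧ ξ ∉ spec δ A₂ ∧ ξ ∉ spec δ A₃ ∧ ξ ∉ spec δ A₄)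

noncomputable def dbl {n : ℕ} (A B : Finset (Fin n → ZMod 2)) : ℝ :=
  ((A + B).card : ℝ) / (Real.sqrt A.card * Real.sqrt B.card)

set_option maxHeartbeats 800000

variable {n : ℕ}

def dotp (ξ x : Fin n → ZMod 2) : ZMod 2 := ∑ i, ξ i * x i

noncomputable def esum (A : Finset (Fin n → ZMod 2)) (ξ : Fin n → ZMod 2) : ℝ :=
  ∑ x ∈ A, (-1 : ℝ) ^ (dotp ξ x).val

def part (ξ : Fin n → ZMod 2) (k : ZMod 2) (A : Finset (Fin n → ZMod 2)) : Finset (Fin n → ZMod 2) :=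
  A.filter (fun x => dotp ξ x = k)

lemma zmod2_cases (z : ZMod 2) : z = 0 ∨ z = 1 := by fin_cases z <;> [exact Or.inl rfl; exact Or.inr rfl]

lemma part_subset (ξ : Fin n → ZMod 2) (k) (A : Finset (Fin n → ZMod 2)) : part ξ k A ⊆ A :=
  Finset.filter_subset _ _

lemma filter_ne0 (A : Finset (Fin n → ZMod 2)) (ξ) :
    A.filter (fun x => ¬ dotp ξ x = 0) = part ξ 1 A := by
  apply Finset.filter_congr
  intro x _
  rcases zmod2_cases (dotp ξ x) with h | h <;> simp [h]

lemma part_card_add (A : Finset (Fin n → ZMod 2)) (ξ) :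
    (part ξ 0 A).card + (part ξ 1 A).card = A.card := by
  rw [← filter_ne0]
  exact Finset.card_filter_add_card_filter_not _

lemma esum_eq_parts (A : Finset (Fin n → ZMod 2)) (ξ) :
    esum A ξ = ((part ξ 0 A).card : ℝ) - (part ξ 1 A).card := by
  rw [esum, ← Finset.sum_filter_add_sum_filter_not A (fun x => dotp ξ x = 0)]
  have h1 : ∑ x ∈ A.filter (fun x => dotp ξ x = 0), ((-1:ℝ)) ^ (dotp ξ x).val
      = ((part ξ 0 A).card : ℝ) := by
    have hterm : ∀ x ∈ A.filter (fun x => dotp ξ x = 0), ((-1:ℝ)) ^ (dotp ξ x).val = 1 := by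
      intro x hx; simp only [Finset.mem_filter] at hx; rw [hx.2]; simp
    rw [Finset.sum_congr rfl hterm, part]; simp
  have h2 : ∑ x ∈ A.filter (fun x => ¬ dotp ξ x = 0), ((-1:ℝ)) ^ (dotp ξ x).val
      = -((part ξ 1 A).card : ℝ) := by
    rw [filter_ne0]
    have hterm : ∀ x ∈ part ξ 1 A, ((-1:ℝ)) ^ (dotp ξ x).val = -1 := by
      intro x hx; simp only [part, Finset.mem_filter] at hx; rw [hx.2]
      norm_num [ZMod.val_one]
    rw [Finset.sum_congr rfl hterm]; simp
  rw [h1, h2]; ring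

lemma mem_spec_iff (δ : ℝ) (A : Finset (Fin n → ZMod 2)) (ξ) :
    ξ ∈ spec δ A ↔ δ * A.card ≤ |esum A ξ| := by
  have h2 : (0:ℝ) < 2 ^ n := by positivity
  have : hatOne A ξ = esum A ξ / 2 ^ n := rfl
  rw [spec, Set.mem_setOf_eq, this, abs_div, abs_of_pos h2, div_le_div_iff_of_pos_right h2]

lemma abs_esum_le (A : Finset (Fin n → ZMod 2)) (ξ) : |esum A ξ| ≤ A.card := by
  rw [esum_eq_parts, ← part_card_add A ξ]
  push_cast
  rw [abs_sub_le_iff]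
  constructor <;> nlinarith [Nat.cast_nonneg (α := ℝ) (part ξ 0 A).card, Nat.cast_nonneg (α := ℝ) (part ξ 1 A).card]

lemma part_add_subset (A B : Finset (Fin n → ZMod 2)) (ξ) (i j : ZMod 2) :
    part ξ i A + part ξ j B ⊆ part ξ (i + j) (A + B) := by
  intro z hz
  rw [Finset.mem_add] at hz
  obtain ⟨a, ha, b, hb, rfl⟩ := hz
  simp only [part, Finset.mem_filter] at ha hb ⊢
  refine ⟨Finset.add_mem_add ha.1 hb.1, ?_⟩
  rw [dotp, ← ha.2, ← hb.2]
  simp [dotp, mul_add, Finset.sum_add_distrib]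

lemma dbl_comm (A B : Finset (Fin n → ZMod 2)) : dbl A B = dbl B A := by
  rw [dbl, dbl, add_comm, mul_comm]

lemma one_le_dbl {A B : Finset (Fin n → ZMod 2)} (hA : A.Nonempty) (hB : B.Nonempty) :
    1 ≤ dbl A B := by
  have hA0 : (0:ℝ) < A.card := by exact_mod_cast Finset.card_pos.2 hA
  have hB0 : (0:ℝ) < B.card := by exact_mod_cast Finset.card_pos.2 hB
  have h1 : (A.card : ℝ) ≤ (A + B).card := by exact_mod_cast Finset.card_le_card_add_right hB
  have h2 : (B.card : ℝ) ≤ (A + B).card := by exact_mod_cast Finset.card_le_card_add_left hA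
  rw [dbl, le_div_iff₀ (by positivity), one_mul]
  calc Real.sqrt A.card * Real.sqrt B.card
      ≤ Real.sqrt (A+B).card * Real.sqrt (A+B).card :=
        mul_le_mul (Real.sqrt_le_sqrt h1) (Real.sqrt_le_sqrt h2) (Real.sqrt_nonneg _) (Real.sqrt_nonneg _)
    _ = ((A+B).card : ℝ) := Real.mul_self_sqrt (by positivity)

lemma core_ineq {m l s δ : ℝ} (h0l : 0 ≤ l) (hlm : l ≤ m) (hm1 : m ≤ 1)
    (hl9 : l ≤ 9/10) (hδm : δ ≤ m) (hδ0 : 0 < δ) (hδ2 : δ^2 ≤ 1/2)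
    (hs0 : 0 ≤ s) (hs : s^2 = 1 - l^2) : 2 + δ ≤ (1+m)*(1+s) := by
  have hδ7 : δ ≤ 7072/10000 := by nlinarith
  have hm0 : 0 ≤ m := le_trans hδ0.le hδm
  have hx0 : 0 ≤ (1+m)*s := mul_nonneg (by linarith) hs0
  rcases le_or_gt m (4/5) with hm | hm
  · have h1 : 1 ≤ (1+l)^3*(1-l) := by nlinarith [mul_nonneg h0l (mul_nonneg h0l h0l)]
    have h2 : (1+l)^2 ≤ (1+m)^2 := by nlinarith
    have h3 : 1 ≤ ((1+m)*s)^2 := by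
      have he : ((1+m)*s)^2 = (1+m)^2*(1-l^2) := by rw [mul_pow, hs]
      nlinarith [sq_nonneg l]
    have key : 1 ≤ (1+m)*s := by nlinarith [h3, hx0]
    nlinarith [key, hδm]
  · rcases le_or_gt (9/10) m with hm9 | hm9
    · have hs19 : (19:ℝ)/100 ≤ s^2 := by nlinarith
      have hs4 : (435:ℝ)/1000 ≤ s := by nlinarith [hs19, hs0]
      nlinarith [mul_nonneg (sub_nonneg.2 hm9) (sub_nonneg.2 hs4)]
    · have hq0 : (17072/10000 - m)^2 ≤ (1+m)^2*(1-m^2) := by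
        nlinarith [mul_nonneg (sub_nonneg.2 hm.le) (sub_nonneg.2 hm9.le), sq_nonneg (m - 85/100),
          mul_nonneg (mul_nonneg (sub_nonneg.2 hm.le) (sub_nonneg.2 hm9.le)) (sub_nonneg.2 hm.le)]
      have hml : (1+m)^2*(1-m^2) ≤ (1+m)^2*(1-l^2) := by
        have h := mul_nonneg (sq_nonneg (1+m)) (show (0:ℝ) ≤ m^2 - l^2 by nlinarith)
        nlinarith [h]
      have hq : (17072/10000 - m)^2 ≤ ((1+m)*s)^2 := by
        have he : ((1+m)*s)^2 = (1+m)^2*(1-l^2) := by rw [mul_pow, hs]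
        linarith [hq0, hml, he.ge, he.le]
      have key : 17072/10000 - m ≤ (1+m)*s := by nlinarith [hq, hx0]
      nlinarith [key, hδ7]

lemma le_of_sq_le_sq' {x y : ℝ} (hy : 0 ≤ y) (h : x^2 ≤ y^2) (hx : 0 ≤ x) : x ≤ y := by
  nlinarith [h, hx, hy]

lemma half_bound {q q0 q1 F : ℝ} (hq : 0 ≤ q) (hsum : q0 + q1 = q)
    (hdiff : (q0-q1)^2 = F^2) (hF0 : 0 ≤ F) (h2 : F ≤ 9/10*q) : q/20 ≤ q0 := by
  have h : (q0-q1-F)*(q0-q1+F) = 0 := by linear_combination hdiff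
  rcases mul_eq_zero.1 h with h | h
  · linarith
  · linarith

lemma restrict (P Q : Finset (Fin n → ZMod 2)) (hP : P.Nonempty) (hQ : Q.Nonempty)
    (ξ : Fin n → ZMod 2) {δ : ℝ} (hδ0 : 0 < δ) (hδ2 : δ^2 ≤ 1/2)
    (h1 : δ * P.card ≤ |esum P ξ|) (h2 : |esum Q ξ| ≤ (9/10) * Q.card)
    (h3 : |esum Q ξ| * P.card ≤ |esum P ξ| * Q.card) :
    ∃ P' Q', P' ⊆ P ∧ Q' ⊆ Q ∧ P'.Nonempty ∧ Q'.Nonempty ∧ Q'.card < Q.card ∧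
      (P.card : ℝ) ≤ 20 * P'.card ∧ (Q.card : ℝ) ≤ 20 * Q'.card ∧
      dbl P' Q' * Real.sqrt (1 + δ/2) ≤ dbl P Q := by
  set p : ℝ := (P.card : ℝ) with hp
  set q : ℝ := (Q.card : ℝ) with hq
  have hp0 : 0 < p := by rw [hp]; exact_mod_cast Finset.card_pos.2 hP
  have hq0 : 0 < q := by rw [hq]; exact_mod_cast Finset.card_pos.2 hQ
  set E : ℝ := |esum P ξ| with hE
  set F : ℝ := |esum Q ξ| with hF
  have hE0 : 0 ≤ E := abs_nonneg _
  have hF0 : 0 ≤ F := abs_nonneg _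
  have hEp : E ≤ p := abs_esum_le P ξ
  have hFq : F ≤ q := abs_esum_le Q ξ
  -- majority part of P
  obtain ⟨i, hi⟩ : ∃ i : ZMod 2, ((part ξ i P).card : ℝ) = (p + E)/2 := by
    have hsplit := part_card_add P ξ
    have hesP := esum_eq_parts P ξ
    rcases le_or_gt ((part ξ 1 P).card : ℝ) ((part ξ 0 P).card : ℝ) with h | h
    · refine ⟨0, ?_⟩
      have : E = ((part ξ 0 P).card : ℝ) - (part ξ 1 P).card := by
        rw [hE, hesP, abs_of_nonneg (by linarith)]
      have hc : ((part ξ 0 P).card : ℝ) + (part ξ 1 P).card = p := by rw [hp]; exact_mod_cast hsplit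
      linarith
    · refine ⟨1, ?_⟩
      have : E = ((part ξ 1 P).card : ℝ) - (part ξ 0 P).card := by
        rw [hE, hesP, abs_of_neg (by linarith)]; ring
      have hc : ((part ξ 0 P).card : ℝ) + (part ξ 1 P).card = p := by rw [hp]; exact_mod_cast hsplit
      linarith
  set P' := part ξ i P with hP'
  have hP'card : ((P'.card : ℝ)) = (p + E)/2 := hi
  have hP'pos : 0 < (P'.card : ℝ) := by rw [hP'card]; linarith
  have hP'ne : P'.Nonempty := Finset.card_pos.1 (by exact_mod_cast hP'pos)
  -- the two parts of Q
  set q0 : ℝ := ((part ξ 0 Q).card : ℝ) with hq0'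
  set q1 : ℝ := ((part ξ 1 Q).card : ℝ) with hq1'
  have hqsum : q0 + q1 = q := by rw [hq0', hq1', hq]; exact_mod_cast part_card_add Q ξ
  have hqdiff : (q0 - q1)^2 = F^2 := by
    have := esum_eq_parts Q ξ
    rw [hF, this, sq_abs]
  have hq0nn : (0:ℝ) ≤ q0 := by positivity
  have hq1nn : (0:ℝ) ≤ q1 := by positivity
  have hq020 : q/20 ≤ q0 := half_bound hq0.le hqsum hqdiff hF0 h2
  have hq120 : q/20 ≤ q1 :=
    half_bound (q0 := q1) (q1 := q0) (F := F) hq0.le (by linarith)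
      (by linear_combination hqdiff) hF0 h2
  have hq0pos : 0 < q0 := lt_of_lt_of_le (by linarith) hq020
  have hq1pos : 0 < q1 := lt_of_lt_of_le (by linarith) hq120
  -- sumset
  set S := P + Q with hS
  have hSsum : ((part ξ i S).card : ℝ) + ((part ξ (i+1) S).card : ℝ) = (S.card : ℝ) := by
    rcases zmod2_cases i with rfl | rfl
    · rw [show (0 + 1 : ZMod 2) = 1 by decide]; exact_mod_cast part_card_add S ξ
    · rw [show (1 + 1 : ZMod 2) = 0 by decide]
      rw [add_comm]; exact_mod_cast part_card_add S ξ
  set b0 : ℝ := Real.sqrt q0 with hb0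
  set b1 : ℝ := Real.sqrt q1 with hb1
  have hb0pos : 0 < b0 := Real.sqrt_pos.2 hq0pos
  have hb1pos : 0 < b1 := Real.sqrt_pos.2 hq1pos
  set a : ℝ := Real.sqrt P'.card with ha
  have hapos : 0 < a := Real.sqrt_pos.2 hP'pos
  -- choose the side j of Q by mediant
  obtain ⟨j, hkey2⟩ : ∃ j : ZMod 2, ((part ξ (i+j) S).card : ℝ) * (b0 + b1) ≤
      Real.sqrt ((part ξ j Q).card : ℝ) * (S.card : ℝ) := by
    rcases le_or_gt (((part ξ (i+0) S).card : ℝ) * b1) (((part ξ (i+1) S).card : ℝ) * b0) with hc | hc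
    · refine ⟨0, ?_⟩
      rw [← hq0', ← hb0]
      rw [add_zero] at hc ⊢
      rw [← hSsum]
      linarith [hc]
    · refine ⟨1, ?_⟩
      rw [← hq1', ← hb1]
      rw [add_zero] at hc
      rw [← hSsum]
      linarith [hc]
  set Q' := part ξ j Q with hQ'
  set qj : ℝ := ((Q'.card : ℝ)) with hqj
  have hqj20 : q/20 ≤ qj := by
    rw [hqj, hQ']; rcases zmod2_cases j with rfl | rfl
    · rw [← hq0']; exact hq020
    · rw [← hq1']; exact hq120
  have hqjlt : qj < q := by
    rw [hqj, hQ']; rcases zmod2_cases j with rfl | rfl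
    · rw [← hq0']; linarith
    · rw [← hq1']; linarith
  have hqjpos : 0 < qj := lt_of_lt_of_le (by linarith) hqj20
  have hQ'ne : Q'.Nonempty := by
    have h := hqjpos
    rw [hqj] at h
    exact Finset.card_pos.1 (by exact_mod_cast h)
  set bj : ℝ := Real.sqrt qj with hbj
  have hbjpos : 0 < bj := Real.sqrt_pos.2 hqjpos
  -- the key analytic inequality
  have hq2F2 : (0:ℝ) ≤ q^2 - F^2 := by
    have h := mul_nonneg (sub_nonneg.2 hFq) (by linarith : (0:ℝ) ≤ q + F)
    linarith [h]
  set G : ℝ := Real.sqrt (q^2 - F^2) with hG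
  have hG0 : 0 ≤ G := Real.sqrt_nonneg _
  have hG2 : G^2 = q^2 - F^2 := Real.sq_sqrt hq2F2
  have hq01 : q0 * q1 = (q^2 - F^2)/4 := by
    linear_combination ((q0+q1+q)/4) * hqsum - (1/4) * hqdiff
  have hb0b1 : b0 * b1 = G/2 := by
    rw [hb0, hb1, ← Real.sqrt_mul hq0nn, hq01,
      show (q^2-F^2)/4 = (q^2-F^2) * (1/2)^2 by ring,
      Real.sqrt_mul hq2F2, Real.sqrt_sq (by norm_num : (0:ℝ) ≤ 1/2), hG]
    ring
  have hcore : (1 + δ/2) * (p * q) ≤ ((p+E)/2) * (q + G) := by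
    have c1 : (0:ℝ) ≤ F/q := by positivity
    have c2 : F/q ≤ E/p := by rw [div_le_div_iff₀ hq0 hp0]; linarith
    have c3 : E/p ≤ 1 := by rw [div_le_one hp0]; exact hEp
    have c4 : F/q ≤ 9/10 := by rw [div_le_iff₀ hq0]; linarith
    have c5 : δ ≤ E/p := by rw [le_div_iff₀ hp0]; linarith
    have c6 : (0:ℝ) ≤ G/q := by positivity
    have c7 : (G/q)^2 = 1 - (F/q)^2 := by
      field_simp
      linarith [hG2]
    have hm := core_ineq c1 c2 c3 c4 c5 hδ0 hδ2 c6 c7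
    have hexp : (1 + E/p) * (1 + G/q) * (p*q/2) = ((p+E)/2)*(q+G) := by field_simp
    have hmul := mul_le_mul_of_nonneg_right hm (by positivity : (0:ℝ) ≤ p*q/2)
    linarith [hmul, hexp]
  have hkey3 : Real.sqrt (1 + δ/2) * (Real.sqrt p * Real.sqrt q) ≤ a * (b0 + b1) := by
    have hsq : (a * (b0+b1))^2 = ((p+E)/2) * (q + G) := by
      have ha2 : a^2 = (p+E)/2 := by rw [ha, Real.sq_sqrt (by positivity), hP'card]
      have hb02 : b0^2 = q0 := Real.sq_sqrt hq0nn
      have hb12 : b1^2 = q1 := Real.sq_sqrt hq1nn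
      have hexpand : (a*(b0+b1))^2 = a^2 * (b0^2 + 2*(b0*b1) + b1^2) := by ring
      rw [hexpand, hb02, hb12, hb0b1, ha2]
      have hqg : q0 + 2*(G/2) + q1 = q + G := by linarith
      rw [hqg]
    have hlhs : (Real.sqrt (1 + δ/2) * (Real.sqrt p * Real.sqrt q))^2 = (1+δ/2)*(p*q) := by
      rw [mul_pow, mul_pow, Real.sq_sqrt (by positivity), Real.sq_sqrt hp0.le, Real.sq_sqrt hq0.le]
    refine le_of_sq_le_sq' (by positivity) ?_ (by positivity)
    rw [hsq, hlhs]
    exact hcore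
  -- cardinality of the restricted sumset
  have hcard : ((P' + Q').card : ℝ) ≤ ((part ξ (i+j) S).card : ℝ) := by
    have hsub : P' + Q' ⊆ part ξ (i+j) S := by rw [hP', hQ', hS]; exact part_add_subset P Q ξ i j
    exact_mod_cast Finset.card_le_card hsub
  refine ⟨P', Q', part_subset _ _ _, part_subset _ _ _, hP'ne, hQ'ne, ?_, ?_, ?_, ?_⟩
  · have : (Q'.card : ℝ) < (Q.card : ℝ) := by rw [← hqj, ← hq] at *; exact hqjlt
    exact_mod_cast this
  · rw [hp, hP'card]; linarith
  · rw [hq]; linarith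
  · -- the doubling inequality
    rw [dbl, dbl, ← ha, ← hbj, ← hS, div_mul_eq_mul_div, div_le_div_iff₀ (by positivity) (by positivity)]
    calc ((P' + Q').card : ℝ) * Real.sqrt (1 + δ/2) * (Real.sqrt p * Real.sqrt q)
        ≤ ((part ξ (i+j) S).card : ℝ) * (a * (b0 + b1)) := by
          rw [mul_assoc]
          exact mul_le_mul hcard hkey3 (by positivity) (by positivity)
      _ = a * (((part ξ (i+j) S).card : ℝ) * (b0 + b1)) := by ring
      _ ≤ a * (bj * (S.card : ℝ)) := by
          apply mul_le_mul_of_nonneg_left _ hapos.le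
          rw [hbj, hqj, hQ']
          exact hkey2
      _ = (S.card : ℝ) * (a * bj) := by ring

lemma sqrt_drop {D J : ℝ} (hD : 0 ≤ D) (hJ : 1 ≤ J)
    (h : D * Real.sqrt (1 + (1/Real.sqrt (2*J))/2) ≤ J) :
    Real.sqrt D ≤ Real.sqrt J - 1/23 := by
  set rj := Real.sqrt J with hrj
  have hrj2 : rj^2 = J := Real.sq_sqrt (by linarith)
  have hrj0 : 0 ≤ rj := Real.sqrt_nonneg _
  have hrj1 : 1 ≤ rj := by nlinarith [hrj2, hrj0]
  set s2 := Real.sqrt 2 with hs2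
  have hs22 : s2^2 = 2 := Real.sq_sqrt (by norm_num)
  have hs20 : 0 ≤ s2 := Real.sqrt_nonneg _
  have hs2a : 141/100 ≤ s2 := le_of_sq_le_sq' hs20 (by nlinarith) (by norm_num)
  have hs2b : s2 ≤ 142/100 := le_of_sq_le_sq' (by norm_num) (by nlinarith) hs20
  have hsqrt2J : Real.sqrt (2*J) = s2 * rj := by
    rw [hs2, hrj, ← Real.sqrt_mul (by norm_num) J]
  rw [hsqrt2J] at h
  set δ : ℝ := 1/(s2*rj) with hδ
  have hs2rjpos : 0 < s2 * rj := by nlinarith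
  have hδ0 : 0 < δ := by rw [hδ]; positivity
  have hδle : δ ≤ 71/100 := by
    rw [hδ, div_le_iff₀ hs2rjpos]; nlinarith
  set u := Real.sqrt (1 + δ/2) with hu
  have hu2 : u^2 = 1 + δ/2 := Real.sq_sqrt (by positivity)
  have hu0 : 0 ≤ u := Real.sqrt_nonneg _
  have hu1 : 1 ≤ u := by nlinarith [hu2, hu0]
  have hu17 : u ≤ 117/100 := le_of_sq_le_sq' (by norm_num) (by nlinarith) hu0
  have h2 : rj*δ*s2 = 1 := by
    rw [hδ]; field_simp
  have h1 : rj^2*(u-1)*(u+1) = rj^2*(δ/2) := by linear_combination (rj^2)*hu2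
  have h4 : 2*s2*((u+1)*(rj^2*(u-1))) = rj := by linear_combination 2*s2*h1 + rj*h2
  have h5 : 2*s2*(u+1) ≤ 6163/1000 := by nlinarith [hs2b, hu17, hs2a, hu1]
  have hy0 : 0 ≤ rj^2*(u-1) := mul_nonneg (sq_nonneg _) (by linarith)
  have h6 : rj ≤ 6163/1000*(rj^2*(u-1)) := by nlinarith [h4, h5, hy0]
  have key : J ≤ (rj - 1/23)^2 * u := by
    rw [← hrj2]
    nlinarith [h6, hu1, hu17, hrj1, mul_nonneg hrj0 (by linarith : (0:ℝ) ≤ 117/100 - u)]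
  have hDle : D ≤ (rj - 1/23)^2 := by
    have hh : D * u ≤ ((rj-1/23)^2)*u := le_trans h key
    exact le_of_mul_le_mul_right hh (by linarith)
  calc Real.sqrt D ≤ Real.sqrt ((rj-1/23)^2) := Real.sqrt_le_sqrt hDle
    _ = rj - 1/23 := Real.sqrt_sq (by linarith)

lemma step (A B : Finset (Fin n → ZMod 2)) (hA : A.Nonempty) (hB : B.Nonempty)
    (hflat : ¬ CoherentlyFlat (1 / Real.sqrt (2 * dbl A B)) A B A B) :
    ∃ A' B', A' ⊆ A ∧ B' ⊆ B ∧ A'.Nonempty ∧ B'.Nonempty ∧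
      A'.card + B'.card < A.card + B.card ∧
      (A.card : ℝ) ≤ 20 * A'.card ∧ (B.card : ℝ) ≤ 20 * B'.card ∧
      Real.sqrt (dbl A' B') ≤ Real.sqrt (dbl A B) - 1/23 := by
  have hJ1 : 1 ≤ dbl A B := one_le_dbl hA hB
  set J := dbl A B with hJdef
  set δ : ℝ := 1 / Real.sqrt (2 * J) with hδdef
  have hsJ : Real.sqrt (2*J) ^ 2 = 2*J := Real.sq_sqrt (by linarith)
  have hsJpos : 0 < Real.sqrt (2*J) := Real.sqrt_pos.2 (by linarith)
  have hδ0 : 0 < δ := by rw [hδdef]; positivity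
  have hδ2 : δ^2 ≤ 1/2 := by
    rw [hδdef, div_pow, one_pow, hsJ, div_le_div_iff₀ (by linarith) (by norm_num)]
    linarith
  have hA0 : (0:ℝ) < A.card := by exact_mod_cast Finset.card_pos.2 hA
  have hB0 : (0:ℝ) < B.card := by exact_mod_cast Finset.card_pos.2 hB
  obtain ⟨ξ, hξ⟩ := not_forall.1 hflat
  rw [not_or] at hξ
  obtain ⟨hc1, hc2⟩ := hξ
  have hsome : δ * (A.card:ℝ) ≤ |esum A ξ| ∨ δ * (B.card:ℝ) ≤ |esum B ξ| := by
    by_contra hcon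
    push_neg at hcon
    have nA : ξ ∉ spec δ A := fun hm => absurd ((mem_spec_iff δ A ξ).1 hm) (by
      push_neg; exact hcon.1)
    have nB : ξ ∉ spec δ B := fun hm => absurd ((mem_spec_iff δ B ξ).1 hm) (by
      push_neg; exact hcon.2)
    exact hc2 ⟨nA, nB, nA, nB⟩
  have hnot : |esum A ξ| ≤ 9/10 * A.card ∨ |esum B ξ| ≤ 9/10 * B.card := by
    by_contra hcon
    push_neg at hcon
    exact hc1 ⟨(mem_spec_iff _ A ξ).2 hcon.1.le, (mem_spec_iff _ B ξ).2 hcon.2.le,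
      (mem_spec_iff _ A ξ).2 hcon.1.le, (mem_spec_iff _ B ξ).2 hcon.2.le⟩
  rcases le_or_gt (|esum A ξ| * B.card) (|esum B ξ| * A.card) with hor | hor
  · -- P = B, Q = A
    have hPQ1 : δ * (B.card:ℝ) ≤ |esum B ξ| := by
      rcases hsome with h | h
      · have := mul_le_mul_of_nonneg_right h (le_of_lt hB0)
        have h2 := le_trans this hor
        exact le_of_mul_le_mul_right (by nlinarith [h2]) hA0
      · exact h
    have hPQ2 : |esum A ξ| ≤ 9/10 * A.card := by
      rcases hnot with h | h
      · exact h
      · have := mul_le_mul_of_nonneg_right h (le_of_lt hA0)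
        have h2 := le_trans hor this
        exact le_of_mul_le_mul_right (by nlinarith [h2]) hB0
    obtain ⟨P', Q', hP'B, hQ'A, hP'ne, hQ'ne, hQlt, hsize1, hsize2, hdbl⟩ :=
      restrict B A hB hA ξ hδ0 hδ2 hPQ1 hPQ2 hor
    refine ⟨Q', P', hQ'A, hP'B, hQ'ne, hP'ne, ?_, hsize2, hsize1, ?_⟩
    · have h1 : Q'.card < A.card := hQlt
      have h2 : P'.card ≤ B.card := Finset.card_le_card hP'B
      omega
    · apply sqrt_drop (le_trans zero_le_one (one_le_dbl hQ'ne hP'ne)) hJ1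
      rw [dbl_comm Q' P']
      rw [dbl_comm B A] at hdbl
      exact hdbl
  · -- P = A, Q = B
    have hPQ1 : δ * (A.card:ℝ) ≤ |esum A ξ| := by
      rcases hsome with h | h
      · exact h
      · have := mul_le_mul_of_nonneg_right h (le_of_lt hA0)
        have h2 := le_trans this hor.le
        exact le_of_mul_le_mul_right (by nlinarith [h2]) hB0
    have hPQ2 : |esum B ξ| ≤ 9/10 * B.card := by
      rcases hnot with h | h
      · have := mul_le_mul_of_nonneg_right h (le_of_lt hB0)
        have h2 := le_trans hor.le this
        exact le_of_mul_le_mul_right (by nlinarith [h2]) hA0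
      · exact h
    obtain ⟨P', Q', hP'A, hQ'B, hP'ne, hQ'ne, hQlt, hsize1, hsize2, hdbl⟩ :=
      restrict A B hA hB ξ hδ0 hδ2 hPQ1 hPQ2 hor.le
    refine ⟨P', Q', hP'A, hQ'B, hP'ne, hQ'ne, ?_, hsize1, hsize2, ?_⟩
    · have h1 : Q'.card < B.card := hQlt
      have h2 : P'.card ≤ A.card := Finset.card_le_card hP'A
      omega
    · exact sqrt_drop (le_trans zero_le_one (one_le_dbl hP'ne hQ'ne)) hJ1 hdbl

lemma twenty_le : (20:ℝ) ≤ Real.exp (70/23) := by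
  have h2 : Real.exp 3 ≤ Real.exp (70/23) := Real.exp_le_exp.2 (by norm_num)
  have h3 : Real.exp 1 ^ (3:ℕ) = Real.exp 3 := by
    rw [← Real.exp_nat_mul]; norm_num
  have h4 := Real.exp_one_gt_d9
  have h5 : (2.7182818283:ℝ)^(3:ℕ) ≤ Real.exp 1 ^ (3:ℕ) :=
    pow_le_pow_left₀ (by norm_num) h4.le 3
  have h6 : (20:ℝ) ≤ (2.7182818283:ℝ)^(3:ℕ) := by norm_num
  linarith

lemma main_ind (N : ℕ) : ∀ (A B : Finset (Fin n → ZMod 2)), A.card + B.card ≤ N →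
    A.Nonempty → B.Nonempty →
    ∃ A' B', A' ⊆ A ∧ B' ⊆ B ∧ A'.Nonempty ∧ B'.Nonempty ∧
      dbl A' B' ≤ dbl A B ∧
      CoherentlyFlat (1 / Real.sqrt (2 * dbl A' B')) A' B' A' B' ∧
      Real.exp (-70 * (Real.sqrt (dbl A B) - Real.sqrt (dbl A' B'))) * A.card ≤ A'.card ∧
      Real.exp (-70 * (Real.sqrt (dbl A B) - Real.sqrt (dbl A' B'))) * B.card ≤ B'.card := by
  induction N with
  | zero =>
    intro A B hcard hA hB
    have := Finset.card_pos.2 hA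
    omega
  | succ N ih =>
    intro A B hcard hA hB
    by_cases hflat : CoherentlyFlat (1 / Real.sqrt (2 * dbl A B)) A B A B
    · refine ⟨A, B, subset_rfl, subset_rfl, hA, hB, le_refl _, hflat, ?_, ?_⟩ <;>
        rw [sub_self, mul_zero, Real.exp_zero, one_mul]
    · obtain ⟨A₁, B₁, hA₁s, hB₁s, hA₁ne, hB₁ne, hcards, hsz1, hsz2, hstep⟩ :=
        step A B hA hB hflat
      obtain ⟨A', B', hA's, hB's, hA'ne, hB'ne, hdle, hflat', hsa, hsb⟩ :=
        ih A₁ B₁ (by omega) hA₁ne hB₁ne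
      have hs0 : (0:ℝ) ≤ Real.sqrt (dbl A' B') := Real.sqrt_nonneg _
      have hs1 : Real.sqrt (dbl A₁ B₁) ≤ Real.sqrt (dbl A B) - 1/23 := hstep
      have hsAB0 : (0:ℝ) ≤ Real.sqrt (dbl A B) := Real.sqrt_nonneg _
      have hs10 : (0:ℝ) ≤ Real.sqrt (dbl A₁ B₁) := Real.sqrt_nonneg _
      have hJle : dbl A₁ B₁ ≤ dbl A B := by
        have h1 : dbl A₁ B₁ = Real.sqrt (dbl A₁ B₁)^2 :=
          (Real.sq_sqrt (le_trans zero_le_one (one_le_dbl hA₁ne hB₁ne))).symm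
        have h2 : dbl A B = Real.sqrt (dbl A B)^2 :=
          (Real.sq_sqrt (le_trans zero_le_one (one_le_dbl hA hB))).symm
        rw [h1, h2]
        nlinarith [hs1, hs10, hsAB0]
      set e0 : ℝ := Real.exp (-70 * (Real.sqrt (dbl A B) - Real.sqrt (dbl A' B'))) with he0
      set e1 : ℝ := Real.exp (-70 * (Real.sqrt (dbl A₁ B₁) - Real.sqrt (dbl A' B'))) with he1
      have he0pos : 0 < e0 := Real.exp_pos _
      have h20 : 20 * e0 ≤ e1 := by
        have hmono : Real.exp (70/23 + -70 * (Real.sqrt (dbl A B) - Real.sqrt (dbl A' B'))) ≤ e1 := by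
          rw [he1]
          apply Real.exp_le_exp.2
          linarith [hs1]
        rw [Real.exp_add] at hmono
        calc 20 * e0 ≤ Real.exp (70/23) * e0 := by
              apply mul_le_mul_of_nonneg_right twenty_le he0pos.le
          _ ≤ e1 := hmono
      have hszA : e0 * A.card ≤ A'.card := by
        calc e0 * A.card ≤ e0 * (20 * A₁.card) := by
              apply mul_le_mul_of_nonneg_left hsz1 he0pos.le
          _ = (20 * e0) * A₁.card := by ring
          _ ≤ e1 * A₁.card := by
              apply mul_le_mul_of_nonneg_right h20 (Nat.cast_nonneg _)
          _ ≤ A'.card := hsa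
      have hszB : e0 * B.card ≤ B'.card := by
        calc e0 * B.card ≤ e0 * (20 * B₁.card) := by
              apply mul_le_mul_of_nonneg_left hsz2 he0pos.le
          _ = (20 * e0) * B₁.card := by ring
          _ ≤ e1 * B₁.card := by
              apply mul_le_mul_of_nonneg_right h20 (Nat.cast_nonneg _)
          _ ≤ B'.card := hsb
      exact ⟨A', B', le_trans hA's hA₁s, le_trans hB's hB₁s, hA'ne, hB'ne,
        le_trans hdle hJle, hflat', hszA, hszB⟩

theorem lemma3 :
    ∃ c > 0, ∃ C > 0, ∀ (n : ℕ) (A B : Finset (Fin n → ZMod 2)),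
      A.Nonempty → B.Nonempty → ∀ K : ℝ, 1 ≤ K → dbl A B ≤ K →
      ∃ A' ⊆ A, ∃ B' ⊆ B, ∃ J : ℝ, 1 ≤ J ∧ J ≤ K ∧
        c * Real.exp (-C * Real.sqrt K) * A.card ≤ A'.card ∧
        c * Real.exp (-C * Real.sqrt K) * B.card ≤ B'.card ∧
        dbl A' B' ≤ J ∧
        CoherentlyFlat (1 / Real.sqrt (2 * J)) A' B' A' B' := by
  refine ⟨1, one_pos, 70, by norm_num, ?_⟩
  intro n A B hA hB K hK hdblK
  obtain ⟨A', B', hA's, hB's, hA'ne, hB'ne, hdle, hflat, hsa, hsb⟩ :=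
    main_ind (A.card + B.card) A B (le_refl _) hA hB
  have hJ1 : 1 ≤ dbl A' B' := one_le_dbl hA'ne hB'ne
  have hexple : Real.exp (-70 * Real.sqrt K) ≤
      Real.exp (-70 * (Real.sqrt (dbl A B) - Real.sqrt (dbl A' B'))) := by
    apply Real.exp_le_exp.2
    have h1 : Real.sqrt (dbl A B) ≤ Real.sqrt K := Real.sqrt_le_sqrt hdblK
    have h2 : (0:ℝ) ≤ Real.sqrt (dbl A' B') := Real.sqrt_nonneg _
    nlinarith [h1, h2]
  refine ⟨A', hA's, B', hB's, dbl A' B', hJ1, le_trans hdle hdblK, ?_, ?_, le_refl _, hflat⟩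
  · rw [one_mul]
    calc Real.exp (-70 * Real.sqrt K) * A.card
        ≤ Real.exp (-70 * (Real.sqrt (dbl A B) - Real.sqrt (dbl A' B'))) * A.card := by
          apply mul_le_mul_of_nonneg_right hexple (Nat.cast_nonneg _)
      _ ≤ A'.card := hsa
  · rw [one_mul]
    calc Real.exp (-70 * Real.sqrt K) * B.card
        ≤ Real.exp (-70 * (Real.sqrt (dbl A B) - Real.sqrt (dbl A' B'))) * B.card := by
          apply mul_le_mul_of_nonneg_right hexple (Nat.cast_nonneg _)
      _ ≤ B'.card := hsb
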